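/- Let u be a real number with 0 < u < arccosh(3/2). Then S_E(u) is purely imaginary with positive imaginary part; that is, Re S_E(u) = 0 and Im S_E(u) = 2·Im Li₂(e^{−u−φ(u)}) + u·(Im φ(u) + 2π) > 0. Consequently, for every positive integer p, with ξ := u + 2pπi and σ₀ := (φ(u) + 2πi)/ξ, one has Re F(σ₀) = 2pπ·Im S_E(u)/|ξ|² > 0. (This is the content of the lemma that 0 < Re F(σ₀), used to identify the exponential growth rate.) -/

import Mathlib

open Complex MeasureTheory ComplexConjugate

/-- Inverse hyperbolic cosine. -/
noncomputable def arccosh (x : ℝ) : ℝ := Real.log (x + Real.sqrt (x ^ 2 - 1))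

/-- ξ = u + 2pπi -/
noncomputable def xiC (u : ℝ) (p : ℕ) : ℂ := (u : ℂ) + 2 * p * Real.pi * Complex.I

/-- The dilogarithm. -/
noncomputable def Li2 (z : ℂ) : ℂ := -∫ t in (0:ℝ)..1, Complex.log (1 - t * z) / t

/-- φ(u). -/
noncomputable def phiu (u : ℝ) : ℂ :=
  Complex.log ((Real.cosh u : ℂ) - 1/2 -
    (Complex.I / 2) * (Real.sqrt ((2 * Real.cosh u + 1) * (3 - 2 * Real.cosh u)) : ℂ))

/-- The potential function F. -/
noncomputable def Ffun (u : ℝ) (p : ℕ) (z : ℂ) : ℂ :=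
  (1 / xiC u p) * Li2 (Complex.exp (-(xiC u p) * (1 + z))) -
  (1 / xiC u p) * Li2 (Complex.exp (-(xiC u p) * (1 - z))) +
  (u : ℂ) * z - 2 * Real.pi * Complex.I

/-- S_E(u). -/
noncomputable def SE (u : ℝ) : ℂ :=
  Li2 (Complex.exp (-(u:ℂ) - phiu u)) - Li2 (Complex.exp (-(u:ℂ) + phiu u)) +
    (u : ℂ) * (phiu u + 2 * Real.pi * Complex.I)

lemma li2_eq_setIntegral (z : ℂ) :
    Li2 z = -∫ t in Set.Ioc (0:ℝ) 1, Complex.log (1 - t * z) / t := by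
  rw [Li2, intervalIntegral.integral_of_le zero_le_one]

lemma re_one_sub_pos {z : ℂ} (hz : ‖z‖ < 1) {t : ℝ}
    (ht0 : 0 ≤ t) (ht1 : t ≤ 1) : 0 < (1 - (t:ℂ) * z).re := by
  have h1 : |z.re| ≤ ‖z‖ := Complex.abs_re_le_norm z
  have h2 : |z.re| ≥ 0 := abs_nonneg _
  have h3 : z.re ≤ |z.re| := le_abs_self _
  simp only [Complex.sub_re, Complex.one_re, Complex.mul_re, Complex.ofReal_re,
    Complex.ofReal_im]
  nlinarith [mul_le_mul_of_nonneg_left h3 ht0, mul_le_one₀ ht1 h2 (h1.trans hz.le)]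

lemma arg_one_sub_ne_pi {z : ℂ} (hz : ‖z‖ < 1) {t : ℝ}
    (ht0 : 0 ≤ t) (ht1 : t ≤ 1) : (1 - (t:ℂ) * z).arg ≠ Real.pi := by
  have h := re_one_sub_pos hz ht0 ht1
  intro hpi
  rw [Complex.arg_eq_pi_iff] at hpi
  linarith [hpi.1]

lemma li2_conj {z : ℂ} (hz : ‖z‖ < 1) :
    Li2 (conj z) = conj (Li2 z) := by
  rw [li2_eq_setIntegral, li2_eq_setIntegral, map_neg, ← integral_conj]
  congr 1
  refine MeasureTheory.setIntegral_congr_fun measurableSet_Ioc (fun t ht => ?_)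
  have harg := arg_one_sub_ne_pi hz ht.1.le ht.2
  calc Complex.log (1 - (t:ℂ) * conj z) / (t:ℂ)
      = conj (Complex.log (1 - (t:ℂ)*z)) / (t:ℂ) := by
        rw [← Complex.log_conj _ harg]
        congr 2
        simp [map_sub, map_mul, Complex.conj_ofReal]
    _ = conj (Complex.log (1 - (t:ℂ)*z) / (t:ℂ)) := by
        rw [map_div₀, Complex.conj_ofReal]

lemma li2_im_nonneg {z : ℂ} (hz : ‖z‖ < 1) (him : 0 ≤ z.im) :
    0 ≤ (Li2 z).im := by
  rw [li2_eq_setIntegral, Complex.neg_im, neg_nonneg]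
  by_cases hint : MeasureTheory.IntegrableOn
      (fun t : ℝ => Complex.log (1 - (t:ℂ) * z) / (t:ℂ)) (Set.Ioc (0:ℝ) 1) volume
  · have h1 : (∫ t in Set.Ioc (0:ℝ) 1, Complex.log (1 - (t:ℂ) * z) / (t:ℂ)).im
        = ∫ t in Set.Ioc (0:ℝ) 1, (Complex.log (1 - (t:ℂ) * z) / (t:ℂ)).im := by
      rw [← RCLike.im_eq_complex_im]
      exact (integral_im hint).symm
    rw [h1]
    refine MeasureTheory.setIntegral_nonpos measurableSet_Ioc (fun t ht => ?_)
    have hre := re_one_sub_pos hz ht.1.le ht.2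
    have himm : (1 - (t:ℂ) * z).im ≤ 0 := by
      simp only [Complex.sub_im, Complex.one_im, Complex.mul_im, Complex.ofReal_re,
        Complex.ofReal_im]
      nlinarith [ht.1.le]
    have harg : (1 - (t:ℂ) * z).arg ≤ 0 := by
      rw [Complex.arg_of_re_nonneg hre.le]
      exact Real.arcsin_nonpos.mpr
        (div_nonpos_of_nonpos_of_nonneg himm (norm_nonneg _))
    have hlogim : (Complex.log (1 - (t:ℂ) * z)).im ≤ 0 := by
      rw [Complex.log_im]; exact harg
    have : (Complex.log (1 - (t:ℂ) * z) / (t:ℂ)).im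
        = (Complex.log (1 - (t:ℂ) * z)).im / t := Complex.div_ofReal_im _ _
    rw [this]
    exact div_nonpos_of_nonpos_of_nonneg hlogim ht.1.le
  · rw [MeasureTheory.integral_undef hint]
    simp

/-- Lemma: `S_E(u)` is purely imaginary with positive imaginary part, and consequently
`Re F(σ₀) = 2pπ·Im S_E(u)/|ξ|² > 0`. -/
theorem SE_purely_imaginary_pos (u : ℝ) (hu0 : 0 < u) (hu1 : u < arccosh (3/2)) :
    (SE u).re = 0 ∧
    (SE u).im = 2 * (Li2 (Complex.exp (-(u : ℂ) - phiu u))).im +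
      u * ((phiu u).im + 2 * Real.pi) ∧
    0 < (SE u).im ∧
    ∀ p : ℕ, 0 < p →
      (Ffun u p ((phiu u + 2 * Real.pi * Complex.I) / xiC u p)).re =
        2 * p * Real.pi * (SE u).im / ‖xiC u p‖ ^ 2 ∧
      0 < (Ffun u p ((phiu u + 2 * Real.pi * Complex.I) / xiC u p)).re := by
  have hπ := Real.pi_pos
  -- bounds on cosh u
  have hc1 : 1 < Real.cosh u := Real.one_lt_cosh.mpr hu0.ne'
  have hsq : Real.sqrt ((3/2:ℝ)^2 - 1) ^ 2 = (3/2:ℝ)^2 - 1 :=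
    Real.sq_sqrt (by norm_num)
  have hsqnn : (0:ℝ) ≤ Real.sqrt ((3/2:ℝ)^2 - 1) := Real.sqrt_nonneg _
  have ha : (0:ℝ) < 3/2 + Real.sqrt ((3/2:ℝ)^2 - 1) := by linarith
  have hcosh32 : Real.cosh (arccosh (3/2)) = 3/2 := by
    rw [arccosh, Real.cosh_eq, Real.exp_neg, Real.exp_log ha]
    have hinv : (3/2 + Real.sqrt ((3/2:ℝ)^2 - 1))⁻¹
        = 3 - (3/2 + Real.sqrt ((3/2:ℝ)^2 - 1)) := by
      refine inv_eq_of_mul_eq_one_right ?_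
      nlinarith
    rw [hinv]; ring
  have hc2 : Real.cosh u < 3/2 := by
    have hpos : 0 < arccosh (3/2) := lt_trans hu0 hu1
    have : Real.cosh u < Real.cosh (arccosh (3/2)) := by
      rw [Real.cosh_lt_cosh, abs_of_pos hu0, abs_of_pos hpos]; exact hu1
    rwa [hcosh32] at this
  -- the quantity under the square root
  have hq : (0:ℝ) < (2 * Real.cosh u + 1) * (3 - 2 * Real.cosh u) := by nlinarith
  have hs2 : Real.sqrt ((2 * Real.cosh u + 1) * (3 - 2 * Real.cosh u)) ^ 2
      = (2 * Real.cosh u + 1) * (3 - 2 * Real.cosh u) := Real.sq_sqrt hq.le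
  have hs0 : (0:ℝ) < Real.sqrt ((2 * Real.cosh u + 1) * (3 - 2 * Real.cosh u)) :=
    Real.sqrt_pos.mpr hq
  set s : ℝ := Real.sqrt ((2 * Real.cosh u + 1) * (3 - 2 * Real.cosh u)) with hsdef
  set w : ℂ := (Real.cosh u : ℂ) - 1/2 - (Complex.I / 2) * (s : ℂ) with hwdef
  have hphi : phiu u = Complex.log w := rfl
  have hwre : w.re = Real.cosh u - 1/2 := by
    simp [hwdef, Complex.div_re]
  have hwim : w.im = -(s/2) := by
    simp [hwdef, Complex.div_im]
    ring
  have hns : Complex.normSq w = 1 := by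
    rw [Complex.normSq_apply, hwre, hwim]
    nlinarith [hs2]
  have habsw : ‖w‖ = 1 := by
    rw [Complex.norm_def, hns, Real.sqrt_one]
  have hw0 : w ≠ 0 := by
    intro h
    rw [h] at habsw; simp at habsw
  have hre0 : (phiu u).re = 0 := by
    rw [hphi, Complex.log_re, habsw, Real.log_one]
  have hargw : -Real.pi < (phiu u).im := by
    rw [hphi, Complex.log_im]; exact Complex.neg_pi_lt_arg w
  have hwinv : w⁻¹ = conj w := by
    rw [Complex.inv_def, hns]
    simp
  -- the point A
  have hexpu : Complex.exp (-(u:ℂ)) = ((Real.exp (-u) : ℝ) : ℂ) := by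
    rw [Complex.ofReal_exp, Complex.ofReal_neg]
  have hA : Complex.exp (-(u:ℂ) - phiu u) = ((Real.exp (-u) : ℝ) : ℂ) * conj w := by
    rw [Complex.exp_sub, hphi, Complex.exp_log hw0, div_eq_mul_inv, hwinv, hexpu]
  have hB : Complex.exp (-(u:ℂ) + phiu u) = conj (Complex.exp (-(u:ℂ) - phiu u)) := by
    rw [hA, map_mul, Complex.conj_conj, Complex.conj_ofReal, Complex.exp_add, hphi,
      Complex.exp_log hw0, hexpu]
  have habsA : ‖Complex.exp (-(u:ℂ) - phiu u)‖ < 1 := by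
    rw [hA, norm_mul, Complex.norm_real, Complex.norm_conj, habsw, mul_one,
      Real.norm_of_nonneg (Real.exp_pos _).le]
    exact Real.exp_lt_one_iff.mpr (by linarith)
  have hAim : 0 ≤ (Complex.exp (-(u:ℂ) - phiu u)).im := by
    rw [hA]
    have h1 : (((Real.exp (-u) : ℝ) : ℂ) * conj w).im = Real.exp (-u) * (conj w).im := by
      rw [Complex.mul_im]
      simp only [Complex.ofReal_re, Complex.ofReal_im, zero_mul, add_zero]
    rw [h1, Complex.conj_im, hwim, neg_neg]
    have := Real.exp_pos (-u)
    nlinarith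
  have hconj : Li2 (Complex.exp (-(u:ℂ) + phiu u))
      = conj (Li2 (Complex.exp (-(u:ℂ) - phiu u))) := by
    rw [hB, li2_conj habsA]
  have hLiim : 0 ≤ (Li2 (Complex.exp (-(u:ℂ) - phiu u))).im := li2_im_nonneg habsA hAim
  -- real and imaginary parts of SE
  have hSEre : (SE u).re = 0 := by
    rw [SE, hconj]
    simp [Complex.add_re, Complex.sub_re, Complex.conj_re, Complex.mul_re,
      Complex.add_im, Complex.mul_im, hre0]
  have hSEim : (SE u).im = 2 * (Li2 (Complex.exp (-(u : ℂ) - phiu u))).im +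
      u * ((phiu u).im + 2 * Real.pi) := by
    rw [SE, hconj]
    simp [Complex.add_im, Complex.sub_im, Complex.conj_im, Complex.mul_im,
      Complex.add_re, Complex.mul_re, hre0]
    ring
  have hSEimpos : 0 < (SE u).im := by
    rw [hSEim]
    have h1 : 0 < (phiu u).im + 2 * Real.pi := by linarith
    nlinarith [mul_pos hu0 h1]
  refine ⟨hSEre, hSEim, hSEimpos, fun p hp => ?_⟩
  -- the ξ computations
  have hξre : (xiC u p).re = u := by simp [xiC]
  have hξim : (xiC u p).im = 2 * p * Real.pi := by simp [xiC]
  have hξ0 : xiC u p ≠ 0 := by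
    intro h
    have := congrArg Complex.re h
    rw [hξre] at this
    simp at this
    exact hu0.ne' this
  have e1 : Complex.exp (-(xiC u p) * (1 + (phiu u + 2 * Real.pi * Complex.I) / xiC u p))
      = Complex.exp (-(u:ℂ) - phiu u) := by
    have h : -(xiC u p) * (1 + (phiu u + 2 * Real.pi * Complex.I) / xiC u p)
        = (-(u:ℂ) - phiu u) + ((-(p:ℤ) - 1 : ℤ) : ℂ) * (2 * Real.pi * Complex.I) := by
      field_simp
      rw [xiC]
      push_cast
      ring
    rw [h, Complex.exp_add, Complex.exp_int_mul_two_pi_mul_I, mul_one]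
  have e2 : Complex.exp (-(xiC u p) * (1 - (phiu u + 2 * Real.pi * Complex.I) / xiC u p))
      = Complex.exp (-(u:ℂ) + phiu u) := by
    have h : -(xiC u p) * (1 - (phiu u + 2 * Real.pi * Complex.I) / xiC u p)
        = (-(u:ℂ) + phiu u) + ((1 - (p:ℤ) : ℤ) : ℂ) * (2 * Real.pi * Complex.I) := by
      field_simp
      rw [xiC]
      push_cast
      ring
    rw [h, Complex.exp_add, Complex.exp_int_mul_two_pi_mul_I, mul_one]
  have hF : Ffun u p ((phiu u + 2 * Real.pi * Complex.I) / xiC u p)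
      = SE u / xiC u p - 2 * Real.pi * Complex.I := by
    rw [Ffun, e1, e2, SE]
    field_simp
  have hFre : (Ffun u p ((phiu u + 2 * Real.pi * Complex.I) / xiC u p)).re
      = 2 * p * Real.pi * (SE u).im / ‖xiC u p‖ ^ 2 := by
    rw [hF, Complex.sub_re, Complex.div_re, hSEre, hξim, hξre, Complex.sq_norm]
    simp [Complex.mul_re, Complex.mul_im]
    ring
  refine ⟨hFre, ?_⟩
  rw [hFre]
  have hnum : 0 < 2 * (p:ℝ) * Real.pi * (SE u).im := by
    have hp' : (0:ℝ) < p := Nat.cast_pos.mpr hp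
    positivity
  exact div_pos hnum (pow_pos (norm_pos_iff.mpr hξ0) 2)
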